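/- arXiv:2502.07668 — 3 statements merged into one kernel-verified Lean document; each statement's English description precedes it below -/
import Mathlib

section
/- With the hypotheses of the projection construction (p₁, p₂ non-proportional future-directed timelike unit vectors in Minkowski ℝ⁴, P² := η(p₁,p₂)), for every v ∈ ℝ⁴ one has η(Π(v), Π(v)) ≤ 0, i.e. the image of the projection Π is a negative-semidefinite (spacelike) subspace; consequently the quantity D² := -η(Π(v),Π(v)) is nonnegative for all v. -/
noncomputable section

/-- The Minkowski inner product of signature (+,-,-,-) on ℝ⁴. -/
def eta (x y : Fin 4 → ℝ) : ℝ := x 0 * y 0 - x 1 * y 1 - x 2 * y 2 - x 3 * y 3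

/-- The η-orthogonal projection onto the orthogonal complement of span{p₁,p₂}. -/
def Pj (p₁ p₂ v : Fin 4 → ℝ) : Fin 4 → ℝ :=
  v + ((eta p₁ p₂ ^ 2 - 1)⁻¹) •
    ((eta p₁ v) • p₁ + (eta p₂ v) • p₂ -
      (eta p₁ p₂) • ((eta p₂ v) • p₁ + (eta p₁ v) • p₂))

lemma eta_symm (x y : Fin 4 → ℝ) : eta x y = eta y x := by
  simp [eta]; ring

lemma eta_add_left (x y z : Fin 4 → ℝ) : eta (x + y) z = eta x z + eta y z := by
  simp [eta]; ring

lemma eta_sub_left (x y z : Fin 4 → ℝ) : eta (x - y) z = eta x z - eta y z := by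
  simp [eta]; ring

lemma eta_smul_left (c : ℝ) (x z : Fin 4 → ℝ) : eta (c • x) z = c * eta x z := by
  simp [eta]; ring

lemma cs_key (p w : Fin 4 → ℝ) (hp : eta p p = 1) (ho : eta w p = 0) :
    (w 0)^2 * (1 + ((p 1)^2 + (p 2)^2 + (p 3)^2)) ≤
      ((w 1)^2 + (w 2)^2 + (w 3)^2) * ((p 1)^2 + (p 2)^2 + (p 3)^2) := by
  simp only [eta] at hp ho
  have h1 : (w 0 * p 0)^2 = (w 1 * p 1 + w 2 * p 2 + w 3 * p 3)^2 := by
    rw [show w 0 * p 0 = w 1 * p 1 + w 2 * p 2 + w 3 * p 3 by linarith]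
  have hCS : (w 1 * p 1 + w 2 * p 2 + w 3 * p 3)^2 ≤
      ((w 1)^2 + (w 2)^2 + (w 3)^2) * ((p 1)^2 + (p 2)^2 + (p 3)^2) := by
    nlinarith [sq_nonneg (w 1 * p 2 - w 2 * p 1), sq_nonneg (w 1 * p 3 - w 3 * p 1),
      sq_nonneg (w 2 * p 3 - w 3 * p 2)]
  have hp' : (p 0)^2 = 1 + ((p 1)^2 + (p 2)^2 + (p 3)^2) := by nlinarith
  nlinarith [h1, hCS, hp']

/-- orthogonal complement of a timelike unit vector is spacelike -/
lemma orth_spacelike (p w : Fin 4 → ℝ) (hp : eta p p = 1) (ho : eta w p = 0) :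
    eta w w ≤ 0 := by
  have key := cs_key p w hp ho
  have hB : (0:ℝ) ≤ (p 1)^2 + (p 2)^2 + (p 3)^2 := by positivity
  have hA : (0:ℝ) ≤ (w 1)^2 + (w 2)^2 + (w 3)^2 := by positivity
  simp only [eta]
  nlinarith [key, hB, hA, sq_nonneg (w 0)]

/-- equality case: orthogonal to timelike and null implies zero -/
lemma orth_null_eq_zero (p w : Fin 4 → ℝ) (hp : eta p p = 1) (ho : eta w p = 0)
    (hn : eta w w = 0) : w = 0 := by
  have key := cs_key p w hp ho
  have hB : (0:ℝ) ≤ (p 1)^2 + (p 2)^2 + (p 3)^2 := by positivity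
  have h0n : (w 0)^2 = (w 1)^2 + (w 2)^2 + (w 3)^2 := by
    simp only [eta] at hn; nlinarith
  have hkey : w 1 ^ 2 + w 2 ^ 2 + w 3 ^ 2 ≤ 0 := by
    nlinarith [key, hB, sq_nonneg (w 0)]
  have h1 : w 1 = 0 := by nlinarith [sq_nonneg (w 1), sq_nonneg (w 2), sq_nonneg (w 3)]
  have h2 : w 2 = 0 := by nlinarith [sq_nonneg (w 1), sq_nonneg (w 2), sq_nonneg (w 3)]
  have h3 : w 3 = 0 := by nlinarith [sq_nonneg (w 1), sq_nonneg (w 2), sq_nonneg (w 3)]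
  have h0 : w 0 = 0 := by
    simp only [eta] at hn
    nlinarith [sq_nonneg (w 0)]
  funext i
  fin_cases i <;> simpa using ‹_›

/-- The image of Π is spacelike: η(Πv,Πv) ≤ 0, hence D² := -η(Πv,Πv) ≥ 0. -/
theorem projection_image_spacelike (p₁ p₂ : Fin 4 → ℝ)
    (h₁ : eta p₁ p₁ = 1) (h₂ : eta p₂ p₂ = 1)
    (hf₁ : 0 < p₁ 0) (hf₂ : 0 < p₂ 0)
    (hprop : ∀ c : ℝ, p₂ ≠ c • p₁) :
    ∀ v : Fin 4 → ℝ,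
      eta (Pj p₁ p₂ v) (Pj p₁ p₂ v) ≤ 0 ∧
      0 ≤ -eta (Pj p₁ p₂ v) (Pj p₁ p₂ v) := by
  set P : ℝ := eta p₁ p₂ with hPdef
  -- P² ≠ 1
  have hP : P ^ 2 - 1 ≠ 0 := by
    intro h
    set w : Fin 4 → ℝ := p₂ - P • p₁ with hw
    have ho : eta w p₁ = 0 := by
      rw [hw, eta_sub_left, eta_smul_left, h₁, eta_symm p₂ p₁]
      ring
    have hn : eta w w = 0 := by
      have : eta w w = eta w p₂ - P * eta w p₁ := by
        rw [show eta w w = eta w (p₂ - P • p₁) from rfl]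
        rw [eta_symm w (p₂ - P • p₁), eta_sub_left, eta_smul_left,
          eta_symm p₂ w, eta_symm p₁ w]
      rw [this, ho]
      have : eta w p₂ = 1 - P ^ 2 := by
        rw [hw, eta_sub_left, eta_smul_left, h₂, ← hPdef]
        ring
      rw [this]
      linarith [h]
    have := orth_null_eq_zero p₁ w h₁ ho hn
    have : p₂ = P • p₁ := by
      have hz := this
      rw [hw] at hz
      funext i
      have := congrFun hz i
      simp only [Pi.sub_apply, Pi.smul_apply, smul_eq_mul, Pi.zero_apply] at this
      simp only [Pi.smul_apply, smul_eq_mul]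
      linarith
    exact hprop P this
  -- orthogonality of the projection to p₁
  intro v
  have ho : eta (Pj p₁ p₂ v) p₁ = 0 := by
    rw [show Pj p₁ p₂ v = v + ((P ^ 2 - 1)⁻¹) •
      ((eta p₁ v) • p₁ + (eta p₂ v) • p₂ -
        P • ((eta p₂ v) • p₁ + (eta p₁ v) • p₂)) from rfl]
    simp only [eta_add_left, eta_sub_left, eta_smul_left]
    rw [h₁, eta_symm p₂ p₁, ← hPdef, eta_symm v p₁]
    field_simp
    ring
  have hle := orth_spacelike p₁ (Pj p₁ p₂ v) h₁ ho
  exact ⟨hle, by linarith⟩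
end
end

section
/- Let γ₁, γ₂, γ₃ be timelike straight lines in Minkowski ℝ⁴ whose direction vectors are linearly independent, and suppose the pairwise distances satisfy D(γ₁,γ₂) = D(γ₂,γ₃) = D(γ₃,γ₁) = 0, where D(γ,γ') = 0 is equivalent to γ and γ' having a common point. Then γ₁, γ₂, γ₃ intersect one another at a single common point q, and the set of timelike straight lines through q equals [γ₁]∩[γ₂]∩[γ₃], where [γ] denotes the set of timelike straight lines meeting γ. -/
noncomputable section

/-- The straight line with direction v through the point ξ. -/
def line (v ξ : Fin 4 → ℝ) : Set (Fin 4 → ℝ) := {x | ∃ u : ℝ, x = u • v + ξ}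

lemma indep3 {v₁ v₂ v₃ : Fin 4 → ℝ} (h : LinearIndependent ℝ ![v₁, v₂, v₃])
    {a b c : ℝ} (hz : a • v₁ + b • v₂ + c • v₃ = 0) : a = 0 ∧ b = 0 ∧ c = 0 := by
  have h' := Fintype.linearIndependent_iff.mp h ![a, b, c] (by
    simpa [Fin.sum_univ_three, add_assoc] using hz)
  exact ⟨h' 0, h' 1, h' 2⟩

/-- Three pairwise intersecting timelike straight lines with linearly independent
directions meet at a single common point q, and the timelike lines through q are
exactly those meeting all three lines (i.e. [q] = [γ₁] ∩ [γ₂] ∩ [γ₃]). -/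
theorem three_lines_common_point (v₁ ξ₁ v₂ ξ₂ v₃ ξ₃ : Fin 4 → ℝ)
    (ht₁ : 0 < eta v₁ v₁) (ht₂ : 0 < eta v₂ v₂) (ht₃ : 0 < eta v₃ v₃)
    (hind : LinearIndependent ℝ ![v₁, v₂, v₃])
    (h₁₂ : (line v₁ ξ₁ ∩ line v₂ ξ₂).Nonempty)
    (h₂₃ : (line v₂ ξ₂ ∩ line v₃ ξ₃).Nonempty)
    (h₃₁ : (line v₃ ξ₃ ∩ line v₁ ξ₁).Nonempty) :
    ∃ q : Fin 4 → ℝ,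
      q ∈ line v₁ ξ₁ ∧ q ∈ line v₂ ξ₂ ∧ q ∈ line v₃ ξ₃ ∧
      (∀ q', q' ∈ line v₁ ξ₁ → q' ∈ line v₂ ξ₂ → q' ∈ line v₃ ξ₃ → q' = q) ∧
      (∀ v ξ : Fin 4 → ℝ, 0 < eta v v →
        (((line v ξ ∩ line v₁ ξ₁).Nonempty ∧ (line v ξ ∩ line v₂ ξ₂).Nonempty ∧
            (line v ξ ∩ line v₃ ξ₃).Nonempty) ↔ q ∈ line v ξ)) := by
  obtain ⟨p, ⟨s₁, hp1⟩, s₂, hp2⟩ := h₁₂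
  obtain ⟨r, ⟨t₂, hr2⟩, t₃, hr3⟩ := h₂₃
  obtain ⟨w, ⟨w₃, hw3⟩, w₁, hw1⟩ := h₃₁
  have h1 : s₁ • v₁ + ξ₁ = s₂ • v₂ + ξ₂ := hp1.symm.trans hp2
  have h2 : t₂ • v₂ + ξ₂ = t₃ • v₃ + ξ₃ := hr2.symm.trans hr3
  have h3 : w₃ • v₃ + ξ₃ = w₁ • v₁ + ξ₁ := hw3.symm.trans hw1
  have key : (s₁ - w₁) • v₁ + (-(s₂ - t₂)) • v₂ + (w₃ - t₃) • v₃ = 0 := by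
    have e : ((s₁ • v₁ + ξ₁) - (s₂ • v₂ + ξ₂)) + ((t₂ • v₂ + ξ₂) - (t₃ • v₃ + ξ₃))
        + ((w₃ • v₃ + ξ₃) - (w₁ • v₁ + ξ₁)) = 0 := by
      rw [sub_eq_zero.mpr h1, sub_eq_zero.mpr h2, sub_eq_zero.mpr h3]; simp
    calc (s₁ - w₁) • v₁ + (-(s₂ - t₂)) • v₂ + (w₃ - t₃) • v₃
        = ((s₁ • v₁ + ξ₁) - (s₂ • v₂ + ξ₂)) + ((t₂ • v₂ + ξ₂) - (t₃ • v₃ + ξ₃))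
          + ((w₃ • v₃ + ξ₃) - (w₁ • v₁ + ξ₁)) := by module
      _ = 0 := e
  obtain ⟨c1, c2, c3⟩ := indep3 hind key
  have hs₁ : s₁ = w₁ := sub_eq_zero.mp c1
  have hs₂ : s₂ = t₂ := sub_eq_zero.mp (neg_eq_zero.mp c2)
  have hpw : p = w := by rw [hp1, hw1, hs₁]
  have hp3 : p = w₃ • v₃ + ξ₃ := by rw [hpw, hw3]
  refine ⟨p, ⟨s₁, hp1⟩, ⟨s₂, hp2⟩, ⟨w₃, hp3⟩, ?_, ?_⟩
  · rintro q' ⟨a₁, ha1⟩ ⟨a₂, ha2⟩ -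
    have e : ((a₁ • v₁ + ξ₁) - (s₁ • v₁ + ξ₁)) - ((a₂ • v₂ + ξ₂) - (s₂ • v₂ + ξ₂)) = 0 := by
      rw [← ha1, ← ha2, ← hp1, ← hp2]; abel
    have hz : (a₁ - s₁) • v₁ + (-(a₂ - s₂)) • v₂ + (0 : ℝ) • v₃ = 0 := by
      calc (a₁ - s₁) • v₁ + (-(a₂ - s₂)) • v₂ + (0 : ℝ) • v₃
          = ((a₁ • v₁ + ξ₁) - (s₁ • v₁ + ξ₁)) - ((a₂ • v₂ + ξ₂) - (s₂ • v₂ + ξ₂)) := by module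
        _ = 0 := e
    obtain ⟨d1, -, -⟩ := indep3 hind hz
    rw [ha1, hp1, sub_eq_zero.mp d1]
  · rintro v ξ -
    constructor
    · rintro ⟨⟨a, ⟨sa, ha⟩, a₁, ha'⟩, ⟨b, ⟨sb, hb⟩, b₂, hb'⟩, ⟨c, ⟨sc, hc⟩, c₃, hc'⟩⟩
      by_cases hA : a₁ = s₁
      · exact ⟨sa, by rw [hp1, ← hA, ← ha', ha]⟩
      by_cases hB : b₂ = s₂
      · exact ⟨sb, by rw [hp2, ← hB, ← hb', hb]⟩
      by_cases hC : c₃ = w₃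
      · exact ⟨sc, by rw [hp3, ← hC, ← hc', hc]⟩
      exfalso
      have hab : (a₁ - s₁) • v₁ + (-(b₂ - s₂)) • v₂ = (sa - sb) • v := by
        have e : ((a₁ • v₁ + ξ₁) - (s₁ • v₁ + ξ₁)) - ((b₂ • v₂ + ξ₂) - (s₂ • v₂ + ξ₂))
            = (sa • v + ξ) - (sb • v + ξ) := by
          rw [← ha', ← hp1, ← hb', ← hp2, ← ha, ← hb]; abel
        calc (a₁ - s₁) • v₁ + (-(b₂ - s₂)) • v₂
            = ((a₁ • v₁ + ξ₁) - (s₁ • v₁ + ξ₁)) - ((b₂ • v₂ + ξ₂) - (s₂ • v₂ + ξ₂)) := by module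
          _ = (sa • v + ξ) - (sb • v + ξ) := e
          _ = (sa - sb) • v := by module
      have hac : (a₁ - s₁) • v₁ + (-(c₃ - w₃)) • v₃ = (sa - sc) • v := by
        have e : ((a₁ • v₁ + ξ₁) - (s₁ • v₁ + ξ₁)) - ((c₃ • v₃ + ξ₃) - (w₃ • v₃ + ξ₃))
            = (sa • v + ξ) - (sc • v + ξ) := by
          rw [← ha', ← hp1, ← hc', ← hp3, ← ha, ← hc]; abel
        calc (a₁ - s₁) • v₁ + (-(c₃ - w₃)) • v₃
            = ((a₁ • v₁ + ξ₁) - (s₁ • v₁ + ξ₁)) - ((c₃ • v₃ + ξ₃) - (w₃ • v₃ + ξ₃)) := by module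
          _ = (sa • v + ξ) - (sc • v + ξ) := e
          _ = (sa - sc) • v := by module
      by_cases hl : sa - sb = 0
      · have hz : (a₁ - s₁) • v₁ + (-(b₂ - s₂)) • v₂ + (0 : ℝ) • v₃ = 0 := by
          rw [hl, zero_smul] at hab
          rw [zero_smul, add_zero, hab]
        obtain ⟨d1, -, -⟩ := indep3 hind hz
        exact hA (sub_eq_zero.mp d1)
      · have hv : v = (sa - sb)⁻¹ • ((a₁ - s₁) • v₁ + (-(b₂ - s₂)) • v₂) := by
          rw [hab, smul_smul, inv_mul_cancel₀ hl, one_smul]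
        rw [hv] at hac
        have key2 : ((a₁ - s₁) - (sa - sc) * (sa - sb)⁻¹ * (a₁ - s₁)) • v₁
            + ((sa - sc) * (sa - sb)⁻¹ * (b₂ - s₂)) • v₂ + (-(c₃ - w₃)) • v₃ = 0 := by
          calc ((a₁ - s₁) - (sa - sc) * (sa - sb)⁻¹ * (a₁ - s₁)) • v₁
              + ((sa - sc) * (sa - sb)⁻¹ * (b₂ - s₂)) • v₂ + (-(c₃ - w₃)) • v₃
              = ((a₁ - s₁) • v₁ + (-(c₃ - w₃)) • v₃)
                - (sa - sc) • ((sa - sb)⁻¹ • ((a₁ - s₁) • v₁ + (-(b₂ - s₂)) • v₂)) := by module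
            _ = 0 := sub_eq_zero.mpr hac
        obtain ⟨-, -, d3⟩ := indep3 hind key2
        exact hC (sub_eq_zero.mp (neg_eq_zero.mp d3))
    · rintro ⟨sq, hq⟩
      exact ⟨⟨p, ⟨sq, hq⟩, s₁, hp1⟩, ⟨p, ⟨sq, hq⟩, s₂, hp2⟩, ⟨p, ⟨sq, hq⟩, w₃, hp3⟩⟩
end
end

section
/- With E₄ := αE₀ + βE₁ + γE₂ + δE₃ in Minkowski ℝ⁴ (α > 0, 1+α² = β²+γ²+δ²), the 2-plane spanned by E₄+E₂ and E₁ is spacelike if and only if β² < 2(1+γ); and the 2-plane spanned by E₁+E₂ and E₄ is spacelike if and only if (β+γ)² < 2. -/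
noncomputable section

/-- The standard orthonormal basis of Minkowski ℝ⁴. -/
def e (i : Fin 4) : Fin 4 → ℝ := fun j => if i = j then 1 else 0

/-- For E₄ := αE₀+βE₁+γE₂+δE₃ (α > 0, 1+α² = β²+γ²+δ²):
span{E₄+E₂,E₁} is spacelike iff β² < 2(1+γ), and
span{E₁+E₂,E₄} is spacelike iff (β+γ)² < 2. -/
theorem spacelike_plane_criteria (α β γ δ : ℝ) (E₄ : Fin 4 → ℝ)
    (hα : 0 < α) (hnorm : 1 + α ^ 2 = β ^ 2 + γ ^ 2 + δ ^ 2)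
    (hE₄ : E₄ = α • e 0 + β • e 1 + γ • e 2 + δ • e 3) :
    ((∀ a b : ℝ, a • (E₄ + e 2) + b • e 1 ≠ 0 →
        eta (a • (E₄ + e 2) + b • e 1) (a • (E₄ + e 2) + b • e 1) < 0) ↔
      β ^ 2 < 2 * (1 + γ)) ∧
    ((∀ a b : ℝ, a • (e 1 + e 2) + b • E₄ ≠ 0 →
        eta (a • (e 1 + e 2) + b • E₄) (a • (e 1 + e 2) + b • E₄) < 0) ↔
      (β + γ) ^ 2 < 2) := by
  subst hE₄
  constructor
  · constructor
    · intro h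
      have h1 := h 1 (-β) (by
        intro hc
        have h0 := congrFun hc 0
        simp [e] at h0
        exact absurd h0 (ne_of_gt hα))
      simp [eta, e] at h1
      nlinarith [h1]
    · intro hlt a b hne
      have hab : a ≠ 0 ∨ b ≠ 0 := by
        by_contra hc
        push_neg at hc
        obtain ⟨ha, hb⟩ := hc
        apply hne
        funext i
        simp [ha, hb]
      simp only [eta, e]
      simp [eta, e]
      rcases eq_or_ne a 0 with ha | ha
      · rcases hab with h | hb
        · exact absurd ha h
        · subst ha
          simp
          nlinarith [mul_self_pos.mpr hb]
      · nlinarith [sq_nonneg (b + β * a), mul_self_pos.mpr ha, sq_nonneg a,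
          mul_pos (mul_self_pos.mpr ha) (by nlinarith : (0:ℝ) < 2 * (1 + γ) - β ^ 2)]
  · constructor
    · intro h
      have h1 := h 1 (-(β + γ)) (by
        intro hc
        have h0 := congrFun hc 0
        have h1' := congrFun hc 1
        have h2' := congrFun hc 2
        simp [e] at h0 h1' h2'
        -- h0 : -(β+γ)*α = 0, h1' : 1 - (β+γ)β = 0, h2' : 1 - (β+γ)γ = 0
        rcases h0 with hb | ha'
        · nlinarith [h1']
        · exact absurd ha' (ne_of_gt hα))
      simp [eta, e] at h1
      nlinarith [h1]
    · intro hlt a b hne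
      have hab : a ≠ 0 ∨ b ≠ 0 := by
        by_contra hc
        push_neg at hc
        obtain ⟨ha, hb⟩ := hc
        apply hne
        funext i
        simp [ha, hb]
      simp [eta, e]
      rcases eq_or_ne a 0 with ha | ha
      · rcases hab with h | hb
        · exact absurd ha h
        · subst ha
          simp
          nlinarith [mul_self_pos.mpr hb]
      · have key : b * α * (b * α) - (a + b * β) * (a + b * β) -
            (a + b * γ) * (a + b * γ) - b * δ * (b * δ) =
            -(2 * a ^ 2 + 2 * a * b * (β + γ) + b ^ 2) := by
          linear_combination b ^ 2 * hnorm
        rcases eq_or_ne b 0 with hb | hb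
        · subst hb
          nlinarith [mul_self_pos.mpr ha]
        · nlinarith [sq_nonneg (2 * a + b * (β + γ)),
            mul_pos (mul_self_pos.mpr hb) (by linarith : (0:ℝ) < 2 - (β + γ) ^ 2)]
end
end
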